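/- For every symmetric 2×2 matrix ξ and η, the Hessian bound D²ψ_λ(ξ)[η,η] ≥ (1/α₀^{N−1})(|ξ|_r^{N−2} ∧ λ^{N−2})|η|_r² holds wherever ψ_λ is twice differentiable (i.e., for |ξ|_r ≠ λ and ξ ≠ 0). -/

import Mathlib

open Matrix MeasureTheory Filter

noncomputable def frobInner (ξ ζ : Matrix (Fin 2) (Fin 2) ℝ) : ℝ :=
  ∑ i : Fin 2, ∑ j : Fin 2, ξ i j * ζ i j

noncomputable def frobNorm (ξ : Matrix (Fin 2) (Fin 2) ℝ) : ℝ :=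
  Real.sqrt (frobInner ξ ξ)

noncomputable def rInner (ξ ζ : Matrix (Fin 2) (Fin 2) ℝ) : ℝ :=
  frobInner ξ ζ - (1 / 3) * Matrix.trace ξ * Matrix.trace ζ

noncomputable def rNorm (ξ : Matrix (Fin 2) (Fin 2) ℝ) : ℝ :=
  Real.sqrt (frobInner ξ ξ - (1 / 3) * Matrix.trace ξ ^ 2)

noncomputable def starNorm (ξ : Matrix (Fin 2) (Fin 2) ℝ) : ℝ :=
  Real.sqrt (frobInner ξ ξ + Matrix.trace ξ ^ 2)

attribute [local instance] Matrix.normedAddCommGroup Matrix.normedSpace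

noncomputable def psi (N : ℕ) (a l : ℝ) (ξ : Matrix (Fin 2) (Fin 2) ℝ) : ℝ :=
  (1 / (N * a ^ (N - 1))) * min (rNorm ξ ^ N) (l ^ N) +
    (1 / (2 * a ^ (N - 1))) * l ^ (N - 2) * max (rNorm ξ ^ 2 - l ^ 2) 0

namespace Stmt17

abbrev M2 := Matrix (Fin 2) (Fin 2) ℝ

noncomputable def Qf (ξ : M2) : ℝ := frobInner ξ ξ - (1 / 3) * Matrix.trace ξ ^ 2

lemma rNorm_eq (ξ : M2) : rNorm ξ = Real.sqrt (Qf ξ) := rfl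

lemma rInner_expand (ξ ζ : M2) : rInner ξ ζ =
    ξ 0 0 * ζ 0 0 + ξ 0 1 * ζ 0 1 + ξ 1 0 * ζ 1 0 + ξ 1 1 * ζ 1 1
      - (1/3) * (ξ 0 0 + ξ 1 1) * (ζ 0 0 + ζ 1 1) := by
  simp only [rInner, frobInner, Fin.sum_univ_two, Matrix.trace_fin_two]
  ring

lemma Qf_eq_rInner (ξ : M2) : Qf ξ = rInner ξ ξ := by
  simp only [Qf, rInner]; ring

lemma Qf_expand (ξ : M2) : Qf ξ =
    ξ 0 0 ^ 2 + ξ 0 1 ^ 2 + ξ 1 0 ^ 2 + ξ 1 1 ^ 2 - (1/3) * (ξ 0 0 + ξ 1 1) ^ 2 := by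
  rw [Qf_eq_rInner, rInner_expand]; ring

lemma rInner_comm (ξ ζ : M2) : rInner ξ ζ = rInner ζ ξ := by
  rw [rInner_expand, rInner_expand]; ring

lemma rInner_add_left (x y ζ : M2) : rInner (x + y) ζ = rInner x ζ + rInner y ζ := by
  simp only [rInner_expand, Matrix.add_apply]; ring

lemma rInner_smul_left (c : ℝ) (x ζ : M2) : rInner (c • x) ζ = c * rInner x ζ := by
  simp only [rInner_expand, Matrix.smul_apply, smul_eq_mul]; ring

lemma rInner_add_right (ζ x y : M2) : rInner ζ (x + y) = rInner ζ x + rInner ζ y := by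
  simp only [rInner_expand, Matrix.add_apply]; ring

lemma rInner_smul_right (c : ℝ) (ζ x : M2) : rInner ζ (c • x) = c * rInner ζ x := by
  simp only [rInner_expand, Matrix.smul_apply, smul_eq_mul]; ring

noncomputable def BL1 (ζ : M2) : M2 →L[ℝ] ℝ :=
  LinearMap.toContinuousLinearMap
    { toFun := fun η => rInner ζ η
      map_add' := fun x y => rInner_add_right ζ x y
      map_smul' := fun c x => rInner_smul_right c ζ x }

lemma BL1_apply (ζ η : M2) : BL1 ζ η = rInner ζ η := rfl

noncomputable def BL : M2 →L[ℝ] M2 →L[ℝ] ℝ :=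
  LinearMap.toContinuousLinearMap
    { toFun := BL1
      map_add' := fun x y => by
        ext η
        simp [BL1_apply, rInner_add_left]
      map_smul' := fun c x => by
        ext η
        simp [BL1_apply, rInner_smul_left] }

lemma BL_apply (ζ η : M2) : BL ζ η = rInner ζ η := rfl

lemma Qf_nonneg (ξ : M2) : 0 ≤ Qf ξ := by
  rw [Qf_expand]
  nlinarith [sq_nonneg (ξ 0 0 - ξ 1 1), sq_nonneg (ξ 0 0), sq_nonneg (ξ 1 1),
    sq_nonneg (ξ 0 1), sq_nonneg (ξ 1 0)]

lemma Qf_pos {ξ : M2} (h : ξ ≠ 0) : 0 < Qf ξ := by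
  have h' : ∃ i j, ξ i j ≠ 0 := by
    by_contra hc
    push_neg at hc
    exact h (by ext i j; simpa using hc i j)
  obtain ⟨i, j, hij⟩ := h'
  have hij2 : 0 < ξ i j ^ 2 := by positivity
  have hsum : 0 < ξ 0 0 ^ 2 + ξ 0 1 ^ 2 + ξ 1 0 ^ 2 + ξ 1 1 ^ 2 := by
    fin_cases i <;> fin_cases j <;>
      simp only [Fin.zero_eta, Fin.mk_one, Fin.isValue] at hij2 <;>
      nlinarith [sq_nonneg (ξ 0 0), sq_nonneg (ξ 0 1), sq_nonneg (ξ 1 0), sq_nonneg (ξ 1 1)]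
  rw [Qf_expand]
  nlinarith [sq_nonneg (ξ 0 0 - ξ 1 1)]

lemma hasFDerivAt_Qf (ζ : M2) : HasFDerivAt Qf ((2:ℝ) • BL ζ) ζ := by
  have h := (BL.hasFDerivAt (x := ζ)).clm_apply (hasFDerivAt_id ζ)
  rw [show Qf = (fun x : M2 => BL x x) from funext fun x => by
    rw [BL_apply, Qf_eq_rInner]]
  refine h.congr_fderiv (ContinuousLinearMap.ext fun θ => ?_)
  show rInner ζ θ + rInner θ ζ = (2:ℝ) * rInner ζ θ
  rw [rInner_comm θ ζ]
  ring

lemma hasFDerivAt_sqrtQ_pow (k : ℕ) (hk : 2 ≤ k) {ζ : M2} (hζ : 0 < Qf ζ) :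
    HasFDerivAt (fun x => Real.sqrt (Qf x) ^ k)
      (((k : ℝ) * Real.sqrt (Qf ζ) ^ (k - 2)) • BL ζ) ζ := by
  have hs : 0 < Real.sqrt (Qf ζ) := Real.sqrt_pos.mpr hζ
  have hder : HasDerivAt (fun x : ℝ => Real.sqrt x ^ k)
      ((k : ℝ) * Real.sqrt (Qf ζ) ^ (k - 1) * (1 / (2 * Real.sqrt (Qf ζ)))) (Qf ζ) :=
    (Real.hasDerivAt_sqrt hζ.ne').pow k
  have h := hder.comp_hasFDerivAt ζ (hasFDerivAt_Qf ζ)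
  have heq : (fun x : M2 => Real.sqrt (Qf x) ^ k)
      = (fun x : ℝ => Real.sqrt x ^ k) ∘ Qf := rfl
  rw [heq]
  suffices e : ((k : ℝ) * Real.sqrt (Qf ζ) ^ (k - 2)) • BL ζ
      = ((k : ℝ) * Real.sqrt (Qf ζ) ^ (k - 1) * (1 / (2 * Real.sqrt (Qf ζ)))) • (2:ℝ) • BL ζ from
    h.congr_fderiv e.symm
  rw [smul_smul]
  congr 1
  have hpow : Real.sqrt (Qf ζ) ^ (k - 1)
      = Real.sqrt (Qf ζ) ^ (k - 2) * Real.sqrt (Qf ζ) := by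
    rw [← pow_succ]
    congr 1
    omega
  rw [hpow]
  field_simp

lemma Qf_continuous : Continuous Qf :=
  continuous_iff_continuousAt.mpr fun x => (hasFDerivAt_Qf x).continuousAt

end Stmt17

open Stmt17

theorem stmt17 (N : ℕ) (hN : 4 ≤ N) (a l : ℝ) (ha : 0 < a) (hl : 0 < l)
    (ξ η : Matrix (Fin 2) (Fin 2) ℝ) (hξ : ξ.IsSymm) (hη : η.IsSymm)
    (h1 : rNorm ξ ≠ l) (h2 : ξ ≠ 0) :
    (1 / a ^ (N - 1)) * min (rNorm ξ ^ (N - 2)) (l ^ (N - 2)) * rNorm η ^ 2 ≤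
      fderiv ℝ (fderiv ℝ (psi N a l)) ξ η η := by
  have hQξ : 0 < Qf ξ := Qf_pos h2
  have hQη : 0 ≤ Qf η := Qf_nonneg η
  have haN : (0:ℝ) < a ^ (N - 1) := pow_pos ha _
  have hrη : rNorm η ^ 2 = rInner η η := by
    rw [rNorm_eq, Real.sq_sqrt hQη, Qf_eq_rInner]
  have hQl : Qf ξ ≠ l ^ 2 := fun h => h1 (by rw [rNorm_eq, h, Real.sqrt_sq hl.le])
  rcases lt_or_gt_of_ne hQl with hcase | hcase
  · -- subcritical case: rNorm ξ < l
    have hsl : Real.sqrt (Qf ξ) < l := by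
      rw [show l = Real.sqrt (l ^ 2) from (Real.sqrt_sq hl.le).symm]
      exact Real.sqrt_lt_sqrt hQξ.le hcase
    have hUopen : IsOpen ({ζ : M2 | 0 < Qf ζ} ∩ {ζ : M2 | Qf ζ < l ^ 2}) :=
      (isOpen_lt continuous_const Qf_continuous).inter (isOpen_lt Qf_continuous continuous_const)
    have hξU : ξ ∈ ({ζ : M2 | 0 < Qf ζ} ∩ {ζ : M2 | Qf ζ < l ^ 2}) := ⟨hQξ, hcase⟩
    have hmemU : Set.EqOn (psi N a l)
        (fun ζ => (1 / (N * a ^ (N-1))) * Real.sqrt (Qf ζ) ^ N)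
        ({ζ : M2 | 0 < Qf ζ} ∩ {ζ : M2 | Qf ζ < l ^ 2}) := by
      intro ζ hζ
      obtain ⟨hζ1, hζ2⟩ := hζ
      have hsl' : Real.sqrt (Qf ζ) < l := by
        rw [show l = Real.sqrt (l ^ 2) from (Real.sqrt_sq hl.le).symm]
        exact Real.sqrt_lt_sqrt (le_of_lt hζ1) hζ2
      have hmin : rNorm ζ ^ N ≤ l ^ N := by
        rw [rNorm_eq]; exact pow_le_pow_left₀ (Real.sqrt_nonneg _) hsl'.le N
      have hmax : rNorm ζ ^ 2 - l ^ 2 ≤ 0 := by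
        rw [rNorm_eq, Real.sq_sqrt (le_of_lt hζ1)]
        exact sub_nonpos.mpr hζ2.le
      unfold psi
      rw [min_eq_left hmin, max_eq_right hmax, rNorm_eq]
      ring
    have hder1 : ∀ ζ ∈ ({ζ : M2 | 0 < Qf ζ} ∩ {ζ : M2 | Qf ζ < l ^ 2}),
        HasFDerivAt (fun ζ => (1 / (N * a ^ (N-1))) * Real.sqrt (Qf ζ) ^ N)
        (((1 / a ^ (N-1)) * Real.sqrt (Qf ζ) ^ (N - 2)) • BL ζ) ζ := by
      intro ζ hζ
      have h := (hasFDerivAt_sqrtQ_pow N (by omega) hζ.1).const_mul ((1:ℝ) / (N * a ^ (N-1)))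
      suffices e : ((1 / a ^ (N-1)) * Real.sqrt (Qf ζ) ^ (N - 2)) • BL ζ
          = ((1:ℝ) / (N * a ^ (N-1))) • ((N:ℝ) * Real.sqrt (Qf ζ) ^ (N - 2)) • BL ζ from h.congr_fderiv e.symm
      rw [smul_smul]
      congr 1
      have hN0 : (N:ℝ) ≠ 0 := Nat.cast_ne_zero.mpr (by omega)
      field_simp
    have hpsi_eq : psi N a l =ᶠ[nhds ξ]
        (fun ζ => (1 / (N * a ^ (N-1))) * Real.sqrt (Qf ζ) ^ N) :=
      Filter.eventuallyEq_of_mem (hUopen.mem_nhds hξU) hmemU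
    have hfd1 : fderiv ℝ (psi N a l) =ᶠ[nhds ξ]
        (fun ζ => ((1 / a ^ (N-1)) * Real.sqrt (Qf ζ) ^ (N - 2)) • BL ζ) := by
      filter_upwards [(Filter.EventuallyEq.fderiv (𝕜 := ℝ) hpsi_eq), hUopen.mem_nhds hξU] with ζ hfe hζ
      rw [hfe, (hder1 ζ hζ).fderiv]
    have hc : HasFDerivAt (fun ζ => (1 / a ^ (N-1)) * Real.sqrt (Qf ζ) ^ (N - 2))
        (((1 / a ^ (N-1)) * (((N - 2 : ℕ)) : ℝ) * Real.sqrt (Qf ξ) ^ (N - 2 - 2)) • BL ξ) ξ := by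
      have h := (hasFDerivAt_sqrtQ_pow (N - 2) (by omega) hQξ).const_mul ((1:ℝ) / a ^ (N-1))
      suffices e : ((1 / a ^ (N-1)) * (((N - 2 : ℕ)) : ℝ) * Real.sqrt (Qf ξ) ^ (N - 2 - 2)) • BL ξ
          = ((1:ℝ) / a ^ (N-1)) • ((((N - 2 : ℕ)) : ℝ) * Real.sqrt (Qf ξ) ^ (N - 2 - 2)) • BL ξ from
        h.congr_fderiv e.symm
      rw [smul_smul]
      congr 1
      ring
    have hD1 : HasFDerivAt
        (fun ζ => ((1 / a ^ (N-1)) * Real.sqrt (Qf ζ) ^ (N - 2)) • BL ζ)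
        (((1 / a ^ (N-1)) * Real.sqrt (Qf ξ) ^ (N - 2)) • (BL : M2 →L[ℝ] M2 →L[ℝ] ℝ)
          + (((1 / a ^ (N-1)) * (((N - 2 : ℕ)) : ℝ) * Real.sqrt (Qf ξ) ^ (N - 2 - 2)) • BL ξ).smulRight
              (BL ξ)) ξ :=
      by
        letI : TopologicalSpace M2 := PseudoMetricSpace.toUniformSpace.toTopologicalSpace
        have hB : HasFDerivAt (fun ζ : M2 => (BL ζ : M2 →L[ℝ] ℝ)) (BL : M2 →L[ℝ] M2 →L[ℝ] ℝ) ξ :=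
          BL.hasFDerivAt
        have := HasFDerivAt.smul (𝕜' := ℝ) (F := M2 →L[ℝ] ℝ) hc hB; exact this
    rw [hfd1.fderiv_eq, hD1.fderiv]
    have hminx : min (rNorm ξ ^ (N - 2)) (l ^ (N - 2)) = rNorm ξ ^ (N - 2) :=
      min_eq_left (by rw [rNorm_eq]; exact pow_le_pow_left₀ (Real.sqrt_nonneg _) hsl.le _)
    rw [hminx, hrη, rNorm_eq]
    simp only [ContinuousLinearMap.add_apply, ContinuousLinearMap.smul_apply,
      ContinuousLinearMap.smulRight_apply, BL_apply, smul_eq_mul]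
    have hnn : 0 ≤ (1 / a ^ (N-1)) * (((N - 2 : ℕ)) : ℝ) * Real.sqrt (Qf ξ) ^ (N - 2 - 2)
        * (rInner ξ η) ^ 2 := by positivity
    nlinarith [hnn]
  · -- supercritical case: rNorm ξ > l
    have hls : l ≤ Real.sqrt (Qf ξ) := by
      rw [show l = Real.sqrt (l ^ 2) from (Real.sqrt_sq hl.le).symm]
      exact Real.sqrt_le_sqrt hcase.le
    have hUopen : IsOpen {ζ : M2 | l ^ 2 < Qf ζ} := isOpen_lt continuous_const Qf_continuous
    have hξU : ξ ∈ {ζ : M2 | l ^ 2 < Qf ζ} := hcase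
    have hmemU : Set.EqOn (psi N a l)
        (fun ζ => (1 / (N * a ^ (N-1))) * l ^ N
          + (1 / (2 * a ^ (N-1))) * l ^ (N-2) * (Qf ζ - l ^ 2))
        {ζ : M2 | l ^ 2 < Qf ζ} := by
      intro ζ hζ
      have hζ' : l ^ 2 < Qf ζ := hζ
      have hQζ : 0 ≤ Qf ζ := Qf_nonneg ζ
      have hls' : l ≤ Real.sqrt (Qf ζ) := by
        rw [show l = Real.sqrt (l ^ 2) from (Real.sqrt_sq hl.le).symm]
        exact Real.sqrt_le_sqrt hζ'.le
      have hmin : l ^ N ≤ rNorm ζ ^ N := by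
        rw [rNorm_eq]; exact pow_le_pow_left₀ hl.le hls' N
      have hmax : 0 ≤ rNorm ζ ^ 2 - l ^ 2 := by
        rw [rNorm_eq, Real.sq_sqrt hQζ]
        exact sub_nonneg.mpr hζ'.le
      unfold psi
      rw [min_eq_right hmin, max_eq_left hmax, rNorm_eq, Real.sq_sqrt hQζ]
    have hder2 : ∀ ζ : M2, HasFDerivAt
        (fun ζ => (1 / (N * a ^ (N-1))) * l ^ N
          + (1 / (2 * a ^ (N-1))) * l ^ (N-2) * (Qf ζ - l ^ 2))
        (((1 / a ^ (N-1)) * l ^ (N-2)) • BL ζ) ζ := by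
      intro ζ
      have h := (((hasFDerivAt_Qf ζ).sub_const (l ^ 2)).const_mul
        ((1 / (2 * a ^ (N-1))) * l ^ (N-2))).const_add ((1 / (N * a ^ (N-1))) * l ^ N)
      suffices e : ((1 / a ^ (N-1)) * l ^ (N-2)) • BL ζ
          = ((1 / (2 * a ^ (N-1))) * l ^ (N-2)) • (2:ℝ) • BL ζ from h.congr_fderiv e.symm
      rw [smul_smul]
      congr 1
      field_simp
    have hpsi_eq : psi N a l =ᶠ[nhds ξ]
        (fun ζ => (1 / (N * a ^ (N-1))) * l ^ N
          + (1 / (2 * a ^ (N-1))) * l ^ (N-2) * (Qf ζ - l ^ 2)) :=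
      Filter.eventuallyEq_of_mem (hUopen.mem_nhds hξU) hmemU
    have hfd2 : fderiv ℝ (psi N a l) =ᶠ[nhds ξ]
        (fun ζ => ((1 / a ^ (N-1)) * l ^ (N-2)) • BL ζ) := by
      filter_upwards [(Filter.EventuallyEq.fderiv (𝕜 := ℝ) hpsi_eq)] with ζ hfe
      rw [hfe, (hder2 ζ).fderiv]
    have hD2 : HasFDerivAt (fun ζ : M2 => ((1 / a ^ (N-1)) * l ^ (N-2)) • BL ζ)
        (((1 / a ^ (N-1)) * l ^ (N-2)) • (BL : M2 →L[ℝ] M2 →L[ℝ] ℝ)) ξ :=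
      ((((1 / a ^ (N-1)) * l ^ (N-2)) • (BL : M2 →L[ℝ] M2 →L[ℝ] ℝ)).hasFDerivAt (x := ξ))
    rw [hfd2.fderiv_eq, hD2.fderiv]
    have hminx : min (rNorm ξ ^ (N - 2)) (l ^ (N - 2)) = l ^ (N - 2) :=
      min_eq_right (by rw [rNorm_eq]; exact pow_le_pow_left₀ hl.le hls _)
    rw [hminx, hrη]
    simp only [ContinuousLinearMap.smul_apply, BL_apply, smul_eq_mul]
    apply le_of_eq
    ring
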